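/- If J is a torsion A-module (via the A-module structure induced by f), then every element (a, f(a)+i) with a ∈ Z(A) and i ∈ J is a zero-divisor of A ⋈^f J. -/

import Mathlib

variable {A B : Type*} [CommRing A] [CommRing B]

/-- The amalgamation `A ⋈^f J` of `A` and `B` along the ideal `J` with respect to `f`,
as a subring of `A × B`. -/
def amalg (f : A →+* B) (J : Ideal B) : Subring (A × B) where
  carrier := {p | ∃ a, ∃ j ∈ J, p = (a, f a + j)}
  zero_mem' := ⟨0, 0, J.zero_mem, by ext <;> simp⟩
  one_mem' := ⟨1, 0, J.zero_mem, by ext <;> simp⟩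
  add_mem' := by
    rintro _ _ ⟨a, j, hj, rfl⟩ ⟨a', j', hj', rfl⟩
    exact ⟨a + a', j + j', J.add_mem hj hj', by simp [Prod.ext_iff]; ring⟩
  neg_mem' := by
    rintro _ ⟨a, j, hj, rfl⟩
    exact ⟨-a, -j, J.neg_mem hj, by simp [Prod.ext_iff]; ring⟩
  mul_mem' := by
    rintro _ _ ⟨a, j, hj, rfl⟩ ⟨a', j', hj', rfl⟩
    exact ⟨a * a', f a * j' + j * f a' + j * j',
      J.add_mem (J.add_mem (J.mul_mem_left _ hj') (J.mul_mem_right _ hj)) (J.mul_mem_right _ hj),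
      by simp [Prod.ext_iff]; ring⟩

/-- The set of zero-divisors of a ring. -/
def zdSet (R : Type*) [CommRing R] : Set R := {a | ∃ b, b ≠ 0 ∧ a * b = 0}

/-- The content ideal of a polynomial: the ideal generated by its coefficients. -/
def contentIdeal {R : Type*} [CommRing R] (p : Polynomial R) : Ideal R :=
  Ideal.span (Set.range p.coeff)

/-- A polynomial is Gaussian if `c(ph) = c(p) c(h)` for every polynomial `h`. -/
def IsGaussianPoly {R : Type*} [CommRing R] (p : Polynomial R) : Prop :=
  ∀ h : Polynomial R, contentIdeal (p * h) = contentIdeal p * contentIdeal h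

/-- A Gaussian ring. -/
def IsGaussianRing (R : Type*) [CommRing R] : Prop :=
  ∀ p q : Polynomial R, contentIdeal (p * q) = contentIdeal p * contentIdeal q

/-- A Prüfer ring: every finitely generated regular ideal is invertible
(in the total ring of quotients). -/
def IsPruferRing (R : Type*) [CommRing R] : Prop :=
  ∀ I : Ideal R, I.FG → (∃ r ∈ I, r ∈ nonZeroDivisors R) →
    ∃ T : FractionalIdeal (nonZeroDivisors R) (FractionRing R),
      (I : FractionalIdeal (nonZeroDivisors R) (FractionRing R)) * T = 1

/-- If `J` is a torsion `A`-module, every element of `A ⋈^f J` whose first coordinate is a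
zero-divisor of `A` is a zero-divisor of `A ⋈^f J`. -/
theorem zeroDivisor_amalg_of_torsion (f : A →+* B) (J : Ideal B) (hJ : J ≠ ⊤)
    (htor : ∀ j ∈ J, ∃ r ∈ nonZeroDivisors A, f r * j = 0) :
    {x : ↥(amalg f J) | (x : A × B).1 ∈ zdSet A} ⊆ zdSet ↥(amalg f J) := by
  rintro ⟨x, hx⟩ ⟨b, hb, hab⟩
  obtain ⟨a, j, hj, rfl⟩ := hx
  obtain ⟨r, hr, hrj⟩ := htor j hj
  refine ⟨⟨(r * b, f (r * b)), ⟨r * b, 0, J.zero_mem, by simp⟩⟩, ?_, ?_⟩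
  · intro h
    have h1 : r * b = 0 := congrArg (fun y : ↥(amalg f J) => (y : A × B).1) h
    exact hb (mem_nonZeroDivisors_iff_right.mp hr b (by rw [mul_comm]; exact h1))
  · apply Subtype.ext
    apply Prod.ext
    · show a * (r * b) = 0
      simp only [zdSet, Set.mem_setOf_eq] at hab ⊢
      calc a * (r * b) = (a * b) * r := by ring
        _ = 0 := by rw [hab]; ring
    · show (f a + j) * f (r * b) = 0
      have h2 : a * (r * b) = 0 := by
        calc a * (r * b) = (a * b) * r := by ring
          _ = 0 := by rw [hab]; ring
      calc (f a + j) * f (r * b) = f (a * (r * b)) + (f r * j) * f b := by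
            simp only [map_mul]; ring
        _ = 0 := by rw [h2, hrj, map_zero]; ring
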